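/- Define V_h := (1/n)·Σ_{i=1}^n ŵ_{h−1}^{(i)} (v_h^{(i)})ᵀ θ_h for h = 1,…,H and V_{H+1} := 0. Then for every h ∈ {1,…,H}, V_h = (1/n)·Σ_{i=1}^n ŵ_h^{(i)} r_h^{(i)} + V_{h+1}. -/
import Mathlib


open Matrix Finset

/-- with `V_h := (1/n) Σᵢ ŵ_{h−1}⁽ⁱ⁾ (v_h⁽ⁱ⁾)ᵀ θ_h` and `V_{H+1} := 0`,
the recursion `V_h = (1/n) Σᵢ ŵ_h⁽ⁱ⁾ r_h⁽ⁱ⁾ + V_{h+1}` holds for every `h ∈ {1,…,H}`,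
where `θ` are the linear FQE coefficients and `ŵ` the Q-MMR weights. -/
theorem stmt_7 (H d n : ℕ) (hn : 0 < n)
    (u v : ℕ → Fin n → Fin d → ℝ) (r : ℕ → Fin n → ℝ)
    (hvtop : ∀ i, v (H + 1) i = 0)
    (Shat : ℕ → Matrix (Fin d) (Fin d) ℝ)
    (hShat : ∀ h, Shat h = (n : ℝ)⁻¹ • ∑ i, vecMulVec (u h i) (u h i))
    (hinv : ∀ h ∈ Icc 1 H, IsUnit (Shat h).det)
    (θ : ℕ → Fin d → ℝ)
    (hθtop : θ (H + 1) = 0)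
    (hθ : ∀ h ∈ Icc 1 H,
      θ h = (Shat h)⁻¹ *ᵥ ((n : ℝ)⁻¹ • ∑ i, (r h i + v (h + 1) i ⬝ᵥ θ (h + 1)) • u h i))
    (w : ℕ → Fin n → ℝ) (hw0 : ∀ i, w 0 i = 1)
    (ψ : ℕ → Fin d → ℝ)
    (hψ : ∀ h ∈ Icc 1 H, ψ h = (n : ℝ)⁻¹ • ∑ i, w (h - 1) i • v h i)
    (hwdef : ∀ h ∈ Icc 1 H, ∀ i, w h i = u h i ⬝ᵥ (Shat h)⁻¹ *ᵥ ψ h)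
    (V : ℕ → ℝ)
    (hV : ∀ h ∈ Icc 1 H, V h = (n : ℝ)⁻¹ * ∑ i, w (h - 1) i * (v h i ⬝ᵥ θ h))
    (hVtop : V (H + 1) = 0) :
    ∀ h ∈ Icc 1 H, V h = (n : ℝ)⁻¹ * ∑ i, w h i * r h i + V (h + 1) := by
  classical
  -- linearity helpers for dot products over sums
  have dsum : ∀ (f : Fin n → Fin d → ℝ) (x : Fin d → ℝ),
      x ⬝ᵥ (∑ i, f i) = ∑ i, x ⬝ᵥ f i := by
    intro f x
    simp only [dotProduct, Finset.sum_apply, Finset.mul_sum]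
    exact Finset.sum_comm
  have sdum : ∀ (f : Fin n → Fin d → ℝ) (x : Fin d → ℝ),
      (∑ i, f i) ⬝ᵥ x = ∑ i, f i ⬝ᵥ x := by
    intro f x
    simp only [dotProduct, Finset.sum_apply, Finset.sum_mul]
    exact Finset.sum_comm
  have msum : ∀ (M : Matrix (Fin d) (Fin d) ℝ) (f : Fin n → Fin d → ℝ),
      M *ᵥ (∑ i, f i) = ∑ i, M *ᵥ f i := by
    intro M f
    funext j
    simp only [Matrix.mulVec, Finset.sum_apply]
    exact dsum f (M j)
  intro h hh
  -- symmetry of Shat h, hence of its inverse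
  have hsymm : (Shat h)ᵀ = Shat h := by
    rw [hShat, Matrix.transpose_smul, Matrix.transpose_sum]
    congr 1
    refine Finset.sum_congr rfl fun i _ => ?_
    ext a b
    simp [Matrix.transpose_apply, vecMulVec_apply, mul_comm]
  have hsymm' : ((Shat h)⁻¹)ᵀ = (Shat h)⁻¹ := by
    rw [Matrix.transpose_nonsing_inv, hsymm]
  -- key: ψ h ⬝ᵥ (Shat h)⁻¹ *ᵥ x = x ⬝ᵥ (Shat h)⁻¹ *ᵥ ψ h
  have key : ∀ x : Fin d → ℝ, ψ h ⬝ᵥ (Shat h)⁻¹ *ᵥ x = x ⬝ᵥ (Shat h)⁻¹ *ᵥ ψ h := by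
    intro x
    rw [Matrix.dotProduct_mulVec, ← Matrix.mulVec_transpose, hsymm', dotProduct_comm]
  -- V h = ψ h ⬝ᵥ θ h
  have hVh : V h = ψ h ⬝ᵥ θ h := by
    rw [hV h hh, hψ h hh, smul_dotProduct, sdum]
    simp only [smul_dotProduct, smul_eq_mul]
  -- expand θ h
  have hexp : V h = (n : ℝ)⁻¹ * ∑ i, w h i * (r h i + v (h + 1) i ⬝ᵥ θ (h + 1)) := by
    rw [hVh, hθ h hh, Matrix.mulVec_smul, dotProduct_smul]
    have h1 : (Shat h)⁻¹ *ᵥ (∑ i, (r h i + v (h + 1) i ⬝ᵥ θ (h + 1)) • u h i)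
        = ∑ i, (r h i + v (h + 1) i ⬝ᵥ θ (h + 1)) • ((Shat h)⁻¹ *ᵥ u h i) := by
      rw [msum]
      exact Finset.sum_congr rfl fun i _ => by rw [Matrix.mulVec_smul]
    rw [h1, dsum]
    simp only [dotProduct_smul, smul_eq_mul, key]
    congr 1
    exact Finset.sum_congr rfl fun i _ => by rw [hwdef h hh i]; ring
  rw [hexp]
  -- split the sum
  have hsplit : ∑ i, w h i * (r h i + v (h + 1) i ⬝ᵥ θ (h + 1))
      = ∑ i, w h i * r h i + ∑ i, w h i * (v (h + 1) i ⬝ᵥ θ (h + 1)) := by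
    rw [← Finset.sum_add_distrib]
    exact Finset.sum_congr rfl fun i _ => by ring
  rw [hsplit, mul_add]
  congr 1
  -- second piece equals V (h+1)
  rcases eq_or_lt_of_le (mem_Icc.mp hh).2 with hH | hH
  · subst hH
    simp [hθtop, hVtop]
  · have hh1 : h + 1 ∈ Icc 1 H := mem_Icc.mpr ⟨Nat.le_add_left 1 h, hH⟩
    rw [hV (h + 1) hh1]
    simp
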